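/- Let F be a subfield of ℝ and S = {g₁,…,g_s} ⊂ F[x] finite with K_S ⊂ ℝ compact. Then the quadratic module M_S = ∑_{i=0}^s F_{≥0} F[x]² gᵢ (with g₀ = 1) is archimedean: there exists N ∈ ℕ with N − x² ∈ M_S. -/

import Mathlib

open Polynomial Filter

set_option synthInstance.maxHeartbeats 400000
set_option maxHeartbeats 1000000

noncomputable def pev (F : Subfield ℝ) (f : F[X]) (x : ℝ) : ℝ := Polynomial.aeval x f

/-- `σ` is a finite sum of terms `t·g²` with `t ∈ F`, `t ≥ 0`, `g ∈ F[x]`. -/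
def SumWtSq (F : Subfield ℝ) (σ : F[X]) : Prop :=
  ∃ (n : ℕ) (t : Fin n → F) (g : Fin n → F[X]),
    (∀ i, (0:ℝ) ≤ (t i : ℝ)) ∧ σ = ∑ i, C (t i) * g i ^ 2

namespace WS
variable {F : Subfield ℝ}

theorem zero : SumWtSq F 0 := ⟨0, ![], ![], by simp, by simp⟩

theorem term {t : F} (ht : (0:ℝ) ≤ (t:ℝ)) (h : F[X]) : SumWtSq F (C t * h ^ 2) :=
  ⟨1, ![t], ![h], by simpa using ht, by simp⟩

theorem add {p q : F[X]} (hp : SumWtSq F p) (hq : SumWtSq F q) : SumWtSq F (p + q) := by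
  obtain ⟨n, t, u, ht, rfl⟩ := hp
  obtain ⟨m, s, v, hs, rfl⟩ := hq
  refine ⟨n + m, Fin.append t s, Fin.append u v, fun i => ?_, ?_⟩
  · induction i using Fin.addCases with
    | left i => simpa [Fin.append_left] using ht i
    | right i => simpa [Fin.append_right] using hs i
  · rw [Fin.sum_univ_add]
    simp [Fin.append_left, Fin.append_right]

theorem sq (h : F[X]) : SumWtSq F (h ^ 2) := by
  have := term (t := 1) (by norm_num) h
  simpa using this

theorem const {t : F} (ht : (0:ℝ) ≤ (t:ℝ)) : SumWtSq F (C t) := by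
  have := term ht 1
  simpa using this

theorem mul_term {p : F[X]} (hp : SumWtSq F p) {t : F} (ht : (0:ℝ) ≤ (t:ℝ)) (h : F[X]) :
    SumWtSq F (p * (C t * h ^ 2)) := by
  obtain ⟨n, s, u, hs, rfl⟩ := hp
  refine ⟨n, fun i => s i * t, fun i => u i * h, fun i => ?_, ?_⟩
  · push_cast; exact mul_nonneg (hs i) ht
  · rw [Finset.sum_mul]
    refine Finset.sum_congr rfl fun i _ => ?_
    push_cast [map_mul]
    ring

theorem mul {p q : F[X]} (hp : SumWtSq F p) (hq : SumWtSq F q) : SumWtSq F (p * q) := by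
  obtain ⟨m, s, v, hs, rfl⟩ := hq
  rw [Finset.mul_sum]
  exact Finset.sum_induction _ _ (fun _ _ => add) zero fun i _ => mul_term hp (hs i) (v i)

theorem sum {ι : Type*} (s : Finset ι) (f : ι → F[X]) (hf : ∀ i ∈ s, SumWtSq F (f i)) :
    SumWtSq F (∑ i ∈ s, f i) :=
  Finset.sum_induction _ _ (fun _ _ => add) zero hf

theorem Cmul {p : F[X]} {t : F} (ht : (0:ℝ) ≤ (t:ℝ)) (hp : SumWtSq F p) :
    SumWtSq F (C t * p) := mul (const ht) hp

end WS

variable {F : Subfield ℝ}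

theorem coe_two : (((2:F)):ℝ) = 2 := by norm_cast

theorem even_id {R : Type*} [CommRing R] (x y : R) (m k : ℕ) :
    x ^ (m + k) + y ^ (m + k) - y ^ k * x ^ m =
      y ^ m * x ^ k +
        ((∑ i ∈ Finset.range m, x ^ i * y ^ (m - 1 - i)) *
          (∑ i ∈ Finset.range k, x ^ i * y ^ (k - 1 - i))) * (x - y) ^ 2 := by
  have h1 := geom_sum₂_mul x y m
  have h2 := geom_sum₂_mul x y k
  have key : ((∑ i ∈ Finset.range m, x ^ i * y ^ (m - 1 - i)) *
      (∑ i ∈ Finset.range k, x ^ i * y ^ (k - 1 - i))) * (x - y) ^ 2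
      = (x ^ m - y ^ m) * (x ^ k - y ^ k) := by
    linear_combination ((∑ i ∈ Finset.range k, x ^ i * y ^ (k - 1 - i)) * (x - y)) * h1 +
      (x ^ m - y ^ m) * h2
  linear_combination -key

variable {F : Subfield ℝ}

/-- geometric-sum factor is a weighted sum of squares -/
theorem W_geomfac (θ : F) (m : ℕ) :
    SumWtSq F (∑ i ∈ Finset.range m, ((X:F[X])^2) ^ i * (C (θ^2)) ^ (m - 1 - i)) := by
  refine WS.sum _ _ fun i _ => ?_
  have : ((X:F[X])^2) ^ i * (C (θ^2)) ^ (m - 1 - i) = C ((θ^2)^(m-1-i)) * (X^i)^2 := by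
    conv_rhs => rw [C_pow]
    rw [pow_right_comm]; ring
  rw [this]
  refine WS.term ?_ _
  push_cast
  positivity

/-- Even monomial lemma -/
theorem EL (m k : ℕ) (hk : k ≠ 0) (a ε : F) (ha : 0 ≤ (a:ℝ)) (hε : 0 < (ε:ℝ)) :
    ∃ N : ℕ, SumWtSq F (C ε * X^(2*(m+k)) - C a * X^(2*m) + C ((N:F))) := by
  -- choose θ
  obtain ⟨n₀, hn₀⟩ := exists_nat_ge ((a:ℝ)/(ε:ℝ))
  set θ : F := ((n₀+1 : ℕ) : F) with hθdef
  have hθR : (θ:ℝ) = (n₀+1 : ℕ) := by push_cast [hθdef]; ring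
  have hθ1 : (1:ℝ) ≤ (θ:ℝ) := by rw [hθR]; exact_mod_cast Nat.succ_le_succ (Nat.zero_le _)
  set τ : F := (θ^2)^k with hτdef
  have hτR : (τ:ℝ) = ((θ:ℝ)^2)^k := by push_cast [hτdef]; ring
  have hτ1 : (1:ℝ) ≤ (τ:ℝ) := by
    rw [hτR]; exact one_le_pow₀ (by nlinarith [hθ1])
  have hτpos : (0:ℝ) < (τ:ℝ) := lt_of_lt_of_le one_pos hτ1
  have hτae : (a:ℝ)/(ε:ℝ) ≤ (τ:ℝ) := by
    rw [hτR]
    calc (a:ℝ)/(ε:ℝ) ≤ n₀ := hn₀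
    _ ≤ (θ:ℝ) := by rw [hθR]; exact_mod_cast Nat.le_succ _
    _ ≤ ((θ:ℝ)^2)^k := by
        calc (θ:ℝ) ≤ (θ:ℝ)^2 := by nlinarith
        _ ≤ ((θ:ℝ)^2)^k := le_self_pow₀ (by nlinarith) hk
  have hτ0 : τ ≠ 0 := by
    intro h; rw [h] at hτpos; simp at hτpos
  set δ : F := a / τ with hδdef
  have hδR : (δ:ℝ) = (a:ℝ)/(τ:ℝ) := by push_cast [hδdef]; ring
  have hδ0 : (0:ℝ) ≤ (δ:ℝ) := by rw [hδR]; positivity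
  have hδε : (δ:ℝ) ≤ (ε:ℝ) := by
    rw [hδR, div_le_iff₀ hτpos]
    rw [div_le_iff₀ hε] at hτae
    nlinarith
  obtain ⟨N, hN⟩ := exists_nat_ge ((δ:ℝ) * ((θ:ℝ)^2)^(m+k))
  refine ⟨N, ?_⟩
  set Pm := ∑ i ∈ Finset.range m, ((X:F[X])^2) ^ i * (C (θ^2)) ^ (m - 1 - i) with hPm
  set Pk := ∑ i ∈ Finset.range k, ((X:F[X])^2) ^ i * (C (θ^2)) ^ (k - 1 - i) with hPk
  have hid := even_id ((X:F[X])^2) (C (θ^2)) m k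
  rw [← hPm, ← hPk] at hid
  have key : C ε * X^(2*(m+k)) - C a * X^(2*m) + C ((N:F)) =
      C δ * (C ((θ^2)^m) * ((X:F[X])^2)^k + (Pm * Pk) * ((X:F[X])^2 - C (θ^2))^2)
      + C (ε - δ) * (X^(m+k))^2 + C ((N:F) - δ * (θ^2)^(m+k)) := by
    have ha' : C a = C δ * C ((θ^2)^k) := by
      rw [← map_mul, hδdef, div_mul_cancel₀ _ hτ0]
    have h1 : (X:F[X])^(2*(m+k)) = ((X:F[X])^2)^(m+k) := by rw [pow_mul]
    have h2 : (X:F[X])^(2*m) = ((X:F[X])^2)^m := by rw [pow_mul]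
    have h3 : ((X:F[X])^(m+k))^2 = ((X:F[X])^2)^(m+k) := by rw [pow_right_comm]
    rw [ha', h1, h2, h3, C_sub, C_sub, C_mul]
    simp only [C_pow] at hid ⊢
    linear_combination (C δ) * hid
  rw [key]
  refine WS.add (WS.add (WS.Cmul hδ0 (WS.add ?_ ?_)) (WS.term ?_ _)) (WS.const ?_)
  · have : (C ((θ^2)^m) * ((X:F[X])^2)^k) = C ((θ^2)^m) * ((X:F[X])^k)^2 := by
      rw [pow_right_comm X 2 k]
    rw [this]
    refine WS.term ?_ _
    push_cast; positivity
  · exact WS.mul (WS.mul (W_geomfac θ m) (W_geomfac θ k)) (WS.sq _)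
  · push_cast; linarith
  · push_cast
    push_cast at hN
    linarith

set_option maxHeartbeats 1000000 in
/-- Odd monomial lemma -/
theorem OL (d m : ℕ) (hmd : m < d) (b ε : F) (hε : 0 < (ε:ℝ)) :
    ∃ N : ℕ, SumWtSq F (C ε * X^(2*d) + C b * X^(2*m+1) + C ((N:F))) := by
  -- sign
  obtain ⟨s, hs2, hsb⟩ : ∃ s : F, s * s = 1 ∧ 0 ≤ ((s*b : F):ℝ) := by
    by_cases h : 0 ≤ (b:ℝ)
    · exact ⟨1, by ring, by push_cast; simpa using h⟩
    · exact ⟨-1, by ring, by push_cast; push_neg at h; nlinarith⟩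
  -- choose θ : big natural number
  obtain ⟨n₀, hn₀⟩ := exists_nat_ge (((s*b : F):ℝ)/(ε:ℝ))
  set θ : F := ((n₀+1 : ℕ) : F) with hθdef
  have hθR : (θ:ℝ) = (n₀+1 : ℕ) := by push_cast [hθdef]; ring
  have hθpos : (0:ℝ) < (θ:ℝ) := by rw [hθR]; positivity
  have hθ0 : θ ≠ 0 := by intro h; rw [h] at hθpos; simp at hθpos
  set c₁ : F := s * b / (2*θ) with hc₁def
  have hc₁R : (c₁:ℝ) = ((s*b:F):ℝ)/(2*(θ:ℝ)) := by push_cast [hc₁def, coe_two]; ring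
  have hc₁0 : 0 ≤ (c₁:ℝ) := by rw [hc₁R]; positivity
  have hc₁ε : (c₁:ℝ) ≤ (ε:ℝ)/2 := by
    rw [hc₁R, div_le_div_iff₀ (by positivity) (by norm_num)]
    have h1 : ((s*b : F):ℝ) ≤ (ε:ℝ) * (n₀:ℝ) := by
      rw [div_le_iff₀ hε] at hn₀; linarith [hn₀]
    have h2 : (n₀:ℝ) ≤ (θ:ℝ) := by rw [hθR]; exact_mod_cast Nat.le_succ _
    nlinarith
  have hCb : C b = C c₁ * 2 * C (s*θ) := by
    have hb' : c₁ * 2 * (s*θ) = b := by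
      rw [hc₁def]
      field_simp
      linear_combination b * hs2
    rw [← hb', C_mul, C_mul, map_ofNat]
  clear_value θ c₁
  -- bracket 1 : top part
  have hbr1 : ∃ (B : F[X]) (N₁ : ℕ),
      SumWtSq F B ∧ B = C (ε/2) * X^(2*d) - C c₁ * X^(2*(m+1)) + C ((N₁:F)) := by
    rcases eq_or_lt_of_le (Nat.succ_le_of_lt hmd) with h | h
    · -- m+1 = d
      subst h
      refine ⟨C (ε/2 - c₁) * (X^(m+1)) ^ 2, 0, WS.Cmul ?_ (WS.sq _), ?_⟩
      · push_cast [coe_two]; linarith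
      · rw [C_sub, Nat.cast_zero, C_0]
        simp only [Nat.succ_eq_add_one]
        ring
    · obtain ⟨N₁, hN₁⟩ := EL (m+1) (d - (m+1)) (by omega) c₁ (ε/2) hc₁0
        (by push_cast [coe_two]; linarith)
      have he : 2*((m+1) + (d - (m+1))) = 2*d := by omega
      rw [he] at hN₁
      exact ⟨_, N₁, hN₁, rfl⟩
  obtain ⟨B₁, N₁, hB₁W, hB₁⟩ := hbr1
  have hth2 : 0 ≤ ((c₁ * θ^2 : F):ℝ) := by push_cast; nlinarith
  obtain ⟨N₂, hN₂⟩ := EL m (d - m) (by omega) (c₁*θ^2) (ε/2) hth2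
    (by push_cast [coe_two]; linarith)
  have he2 : 2*(m + (d - m)) = 2*d := by omega
  rw [he2] at hN₂
  refine ⟨N₁ + N₂, ?_⟩
  have key : C ε * X^(2*d) + C b * X^(2*m+1) + C (((N₁+N₂:ℕ)):F) =
      C c₁ * (X^(m+1) + C (s*θ) * X^m)^2 + B₁
      + (C (ε/2) * X^(2*d) - C (c₁*θ^2) * X^(2*m) + C ((N₂:F))) := by
    rw [hB₁]
    have hcn : (((N₁+N₂:ℕ)):F) = ((N₁:ℕ):F) + ((N₂:ℕ):F) := by push_cast; ring
    have hCe : C ε = C (ε/2) + C (ε/2) := by rw [← C_add, add_halves]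
    have hCth : C (c₁*θ^2) = C c₁ * C (s*θ)^2 := by
      rw [← C_pow, ← C_mul]
      congr 1
      linear_combination (-(c₁*θ^2)) * hs2
    rw [hcn, C_add, hCe]
    linear_combination (X:F[X])^(2*m+1) * hCb + (X:F[X])^(2*m) * hCth
  rw [key]
  exact WS.add (WS.add (WS.Cmul hc₁0 (WS.sq _)) hB₁W) hN₂

/-- any monomial below degree 2d -/
theorem ML (d k : ℕ) (hk : k < 2*d) (b ε : F) (hε : 0 < (ε:ℝ)) :
    ∃ N : ℕ, SumWtSq F (C ε * X^(2*d) + C b * X^k + C ((N:F))) := by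
  rcases Nat.even_or_odd k with ⟨m, hm⟩ | ⟨m, hm⟩
  · by_cases hb : 0 ≤ (b:ℝ)
    · refine ⟨0, ?_⟩
      have h1 : C ε * (X:F[X])^(2*d) = C ε * ((X:F[X])^d)^2 := by
        rw [show 2*d = d*2 from Nat.mul_comm 2 d, pow_mul]
      have h2 : C b * (X:F[X])^k = C b * ((X:F[X])^m)^2 := by
        rw [show k = m*2 by omega, pow_mul]
      rw [h1, h2, Nat.cast_zero, C_0]
      exact WS.add (WS.add (WS.term (le_of_lt hε) _) (WS.term hb _)) WS.zero
    · obtain ⟨N, hN⟩ := EL m (d - m) (by omega) (-b) ε (by push_cast; push_neg at hb; linarith) hε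
      have he : 2*(m + (d-m)) = 2*d := by omega
      rw [he] at hN
      refine ⟨N, ?_⟩
      have : C ε * X^(2*d) + C b * X^k + C ((N:F)) =
          C ε * X^(2*d) - C (-b) * X^(2*m) + C ((N:F)) := by
        rw [C_neg]
        have : k = 2*m := by omega
        rw [this]; ring
      rw [this]; exact hN
  · have : k = 2*m+1 := by omega
    rw [this]
    exact OL d m (by omega) b ε hε

/-- main workhorse : positive leading coefficient in even degree, plus large constant -/
theorem lemC (d : ℕ) (hd : 1 ≤ d) (A : F) (hA : 0 < (A:ℝ)) (p : F[X])
    (hp : p.natDegree < 2*d) :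
    ∃ N : ℕ, SumWtSq F (C A * X^(2*d) + p + C ((N:F))) := by
  set c : F := ((2*d : ℕ) : F) with hcdef
  have hcR : (c:ℝ) = (2*d:ℕ) := by rw [hcdef]; norm_cast
  have hcpos : (0:ℝ) < (c:ℝ) := by rw [hcR]; exact_mod_cast Nat.pos_of_ne_zero (by omega)
  have hc0 : c ≠ 0 := fun h => by rw [h] at hcpos; simp at hcpos
  set ε : F := A / c with hεdef
  have hεpos : 0 < (ε:ℝ) := by
    have : (ε:ℝ) = (A:ℝ)/(c:ℝ) := by push_cast [hεdef]; ring
    rw [this]; positivity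
  have H : ∀ k : ℕ, ∃ N : ℕ, k < 2*d →
      SumWtSq F (C ε * X^(2*d) + C (p.coeff k) * X^k + C ((N:F))) := by
    intro k
    by_cases hk : k < 2*d
    · obtain ⟨N, hN⟩ := ML d k hk (p.coeff k) ε hεpos
      exact ⟨N, fun _ => hN⟩
    · exact ⟨0, fun h => absurd h hk⟩
  choose Nf hNf using H
  refine ⟨∑ k ∈ Finset.range (2*d), Nf k, ?_⟩
  have key : C A * X^(2*d) + p + C (((∑ k ∈ Finset.range (2*d), Nf k : ℕ)):F) =
      ∑ k ∈ Finset.range (2*d),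
        (C ε * X^(2*d) + C (p.coeff k) * X^k + C ((Nf k : ℕ):F)) := by
    rw [Finset.sum_add_distrib, Finset.sum_add_distrib]
    have h1 : ∑ _k ∈ Finset.range (2*d), C ε * (X:F[X])^(2*d) = C A * X^(2*d) := by
      rw [Finset.sum_const, Finset.card_range, nsmul_eq_mul]
      have e1 : ((2*d : ℕ) : F[X]) = C c := by rw [hcdef, C_eq_natCast]
      rw [e1, ← mul_assoc, ← C_mul, hεdef, mul_div_cancel₀ _ hc0]
    have h2 : ∑ k ∈ Finset.range (2*d), C (p.coeff k) * (X:F[X])^k = p := by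
      conv_rhs => rw [p.as_sum_range' (2*d) hp]
      exact Finset.sum_congr rfl fun k _ => C_mul_X_pow_eq_monomial
    have h3 : C ((((∑ k ∈ Finset.range (2*d), Nf k : ℕ))):F) =
        ∑ k ∈ Finset.range (2*d), C (((Nf k : ℕ)):F) := by
      rw [Nat.cast_sum]
      exact map_sum C _ _
    rw [h1, h2, h3]
  rw [key]
  exact WS.sum _ _ fun k hk => hNf k (Finset.mem_range.mp hk)

/-- strip the top coefficient -/
theorem strip {R : Type*} [CommRing R] (q : R[X]) (n : ℕ) (hq : q.natDegree ≤ n) :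
    (q - C (q.coeff n) * X^n).degree < (n : WithBot ℕ) := by
  rw [degree_lt_iff_coeff_zero]
  intro j hj
  rcases eq_or_lt_of_le hj with h | h
  · subst h
    simp [coeff_X_pow]
  · rw [coeff_sub, coeff_C_mul, coeff_X_pow, if_neg (by omega), mul_zero, sub_zero]
    exact coeff_eq_zero_of_natDegree_lt (lt_of_le_of_lt hq h)

theorem finalStep {s : ℕ} (g : Fin s → F[X]) (σ : Fin s → F[X])
    (hσ : ∀ i, SumWtSq F (σ i)) (D : ℕ) (hD : 2 ≤ D)
    (hdeg : (∑ i, σ i * g i).natDegree ≤ 2*D)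
    (hneg : (((∑ i, σ i * g i).coeff (2*D)) : ℝ) < 0) :
    ∃ N : ℕ, ∃ (σ₀ : F[X]) (σ' : Fin s → F[X]),
      SumWtSq F σ₀ ∧ (∀ i, SumWtSq F (σ' i)) ∧
      C ((N : F)) - X ^ 2 = σ₀ + ∑ i, σ' i * g i := by
  set q : F[X] := ∑ i, σ i * g i with hqdef
  set A : F := -(q.coeff (2*D)) with hAdef
  have hA : 0 < (A:ℝ) := by
    have : (A:ℝ) = -((q.coeff (2*D) : F):ℝ) := by push_cast [hAdef]; ring
    rw [this]; linarith
  set p : F[X] := -(q - C (q.coeff (2*D)) * X^(2*D)) - X^2 with hpdef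
  have hpd : p.natDegree < 2*D := by
    by_cases h0 : p = 0
    · rw [h0]; simp; omega
    · rw [natDegree_lt_iff_degree_lt h0]
      have h1 : p.degree ≤ max (q - C (q.coeff (2*D)) * X^(2*D)).degree ((X:F[X])^2).degree := by
        rw [hpdef]
        exact le_trans (degree_sub_le _ _) (by rw [degree_neg])
      refine lt_of_le_of_lt h1 (max_lt (strip q (2*D) hdeg) ?_)
      rw [degree_X_pow]
      exact_mod_cast (by omega : 2 < 2*D)
  obtain ⟨N, hN⟩ := lemC D (by omega) A hA p hpd
  refine ⟨N, C ((N:F)) - X^2 - q, σ, ?_, hσ, by ring⟩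
  have : C ((N:F)) - X^2 - q = C A * X^(2*D) + p + C ((N:F)) := by
    rw [hpdef, hAdef, C_neg]
    ring
  rw [this]
  exact hN

theorem Wsingle {s : ℕ} {v : F[X]} (hv : SumWtSq F v) (i0 i : Fin s) :
    SumWtSq F ((Pi.single i0 v : Fin s → F[X]) i) := by
  rcases eq_or_ne i i0 with h | h
  · subst h; rw [Pi.single_eq_same]; exact hv
  · rw [Pi.single_eq_of_ne h]; exact WS.zero

theorem sum_single {s : ℕ} (g : Fin s → F[X]) (i0 : Fin s) (v : F[X]) :
    ∑ i, (Pi.single i0 v : Fin s → F[X]) i * g i = v * g i0 := by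
  have : ∀ i : Fin s, (Pi.single i0 v : Fin s → F[X]) i * g i = if i = i0 then v * g i else 0 := by
    intro i
    rcases eq_or_ne i i0 with h | h
    · subst h; simp
    · simp [Pi.single_eq_of_ne h, h]
  rw [Finset.sum_congr rfl fun i _ => this i, Finset.sum_ite_eq' Finset.univ i0]
  simp

theorem coeff_CX (u : F) (e k : ℕ) : (C u * X^e : F[X]).coeff k = if k = e then u else 0 := by
  simp [coeff_C_mul, coeff_X_pow, mul_ite]

/-- natDegree from strict degree bound -/
theorem ndeg_of_deg_lt (p : F[X]) (n : ℕ) (h : p.degree < ((n+1 : ℕ) : WithBot ℕ)) :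
    p.natDegree ≤ n := by
  by_cases h0 : p = 0
  · simp [h0]
  · rw [← natDegree_lt_iff_degree_lt h0] at h
    omega

theorem caseA {s : ℕ} (g : Fin s → F[X]) (i0 : Fin s) (h0 : g i0 ≠ 0)
    (hlc : (((g i0).leadingCoeff : F) : ℝ) < 0) (hev : Even (g i0).natDegree) :
    ∃ N : ℕ, ∃ (σ₀ : F[X]) (σ' : Fin s → F[X]),
      SumWtSq F σ₀ ∧ (∀ i, SumWtSq F (σ' i)) ∧
      C ((N : F)) - X ^ 2 = σ₀ + ∑ i, σ' i * g i := by
  obtain ⟨m, hm⟩ := hev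
  set a : F := (g i0).leadingCoeff with hadef
  have ha0 : a ≠ 0 := fun h => by rw [h] at hlc; simp at hlc
  have hna : (0:ℝ) < ((-a : F):ℝ) := by push_cast; linarith
  have hti : (0:ℝ) ≤ (((-a)⁻¹ : F):ℝ) := by push_cast; positivity
  set v : F[X] := C (-a)⁻¹ * ((X:F[X])^2)^2 with hvdef
  have hv : SumWtSq F v := WS.Cmul hti (WS.sq _)
  refine finalStep g (Pi.single i0 v) (fun i => Wsingle hv i0 i) (m+2) (by omega) ?_ ?_
  · rw [sum_single]
    refine le_trans natDegree_mul_le ?_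
    have h1 : v.natDegree ≤ 4 := by
      rw [hvdef]
      refine le_trans (natDegree_C_mul_le _ _) ?_
      simp [← pow_mul]
    have h2 : (g i0).natDegree = m + m := hm
    omega
  · rw [sum_single]
    have hrw : v * g i0 = C (-a)⁻¹ * ((X:F[X])^4 * g i0) := by rw [hvdef]; ring
    rw [hrw, coeff_C_mul, show 2*(m+2) = (m+m) + 4 by omega, coeff_X_pow_mul]
    rw [show m + m = (g i0).natDegree from hm.symm, coeff_natDegree, ← hadef]
    have : (-a)⁻¹ * a = -1 := by field_simp
    rw [this]
    push_cast
    norm_num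

set_option maxHeartbeats 2000000 in
theorem caseB {s : ℕ} (g : Fin s → F[X]) (i1 i2 : Fin s) (m n : ℕ)
    (hd1 : (g i1).natDegree = 2*m+1) (hd2 : (g i2).natDegree = 2*n+1)
    (hlc1 : (((g i1).leadingCoeff : F) : ℝ) < 0)
    (hlc2 : (0:ℝ) < (((g i2).leadingCoeff : F) : ℝ)) :
    ∃ N : ℕ, ∃ (σ₀ : F[X]) (σ' : Fin s → F[X]),
      SumWtSq F σ₀ ∧ (∀ i, SumWtSq F (σ' i)) ∧
      C ((N : F)) - X ^ 2 = σ₀ + ∑ i, σ' i * g i := by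
  set a : F := -(g i1).leadingCoeff with hadef
  set b : F := (g i2).leadingCoeff with hbdef
  have haR : (0:ℝ) < (a:ℝ) := by push_cast [hadef]; linarith
  have hbR : (0:ℝ) < (b:ℝ) := hlc2
  have ha0 : a ≠ 0 := fun h => by rw [h] at haR; simp at haR
  have hb0 : b ≠ 0 := fun h => by rw [h] at hbR; simp at hbR
  -- lower parts
  set eG : F[X] := g i1 - C ((g i1).coeff (2*m+1)) * X^(2*m+1) with heGdef
  set eH : F[X] := g i2 - C ((g i2).coeff (2*n+1)) * X^(2*n+1) with heHdef
  have hG : g i1 = C (-a) * X^(2*m+1) + eG := by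
    rw [heGdef, hadef, neg_neg, ← hd1, coeff_natDegree]; ring
  have hH : g i2 = C b * X^(2*n+1) + eH := by
    rw [heHdef, hbdef, ← hd2, coeff_natDegree]; ring
  have hdegG : eG.natDegree ≤ 2*m := by
    have h' := strip (g i1) (2*m+1) (le_of_eq hd1)
    rw [← heGdef] at h'
    exact ndeg_of_deg_lt _ _ h'
  have hdegH : eH.natDegree ≤ 2*n := by
    have h' := strip (g i2) (2*n+1) (le_of_eq hd2)
    rw [← heHdef] at h'
    exact ndeg_of_deg_lt _ _ h'
  -- parameters
  set L : ℕ := max m n + 1 with hLdef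
  set s1 : ℕ := L - m with hs1def
  set t1 : ℕ := L + 1 - n with ht1def
  have hs1 : m + s1 = L := by omega
  have ht1 : n + t1 = L + 1 := by omega
  set g1 : F := eG.coeff (2*m) with hg1def
  set h1 : F := eH.coeff (2*n) with hh1def
  set c : F := (b*g1 + a*h1 + 1)/(2*(a*b)) with hcdef
  have hc : a*b*(2*c) = b*g1 + a*h1 + 1 := by
    rw [hcdef]; field_simp
  -- the multipliers
  set σ1 : F[X] := C b * (X^s1 * (X + C c))^2 with hσ1def
  set σ2 : F[X] := C a * ((X:F[X])^t1)^2 with hσ2def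
  have hσ1W : SumWtSq F σ1 := WS.Cmul (le_of_lt hbR) (WS.sq _)
  have hσ2W : SumWtSq F σ2 := WS.Cmul (le_of_lt haR) (WS.sq _)
  set σ : Fin s → F[X] := fun i =>
    (Pi.single i1 σ1 : Fin s → F[X]) i + (Pi.single i2 σ2 : Fin s → F[X]) i with hσdef
  have hσW : ∀ i, SumWtSq F (σ i) := fun i =>
    WS.add (Wsingle hσ1W i1 i) (Wsingle hσ2W i2 i)
  have hsum : ∑ i, σ i * g i = σ1 * g i1 + σ2 * g i2 := by
    rw [hσdef]
    simp only [add_mul]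
    rw [Finset.sum_add_distrib, sum_single, sum_single]
  -- decomposition of q
  have hab : C (-a) * C b = -(C (a*b)) := by
    rw [← C_mul, ← C_neg]; congr 1; ring
  have e1 : σ1 * (C (-a) * X^(2*m+1)) = -(C (a*b) * (X^(2*L+1) * (X + C c)^2)) := by
    rw [hσ1def, show 2*L+1 = 2*s1 + (2*m+1) by omega]
    linear_combination ((X:F[X])^(2*s1 + (2*m+1)) * (X + C c)^2) * hab
  have e2 : σ2 * (C b * X^(2*n+1)) = C (a*b) * X^(2*L+3) := by
    rw [hσ2def, show 2*L+3 = 2*t1 + (2*n+1) by omega]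
    conv_rhs => rw [C_mul]
    ring
  have h2c : C (a*b*(2*c)) = C (a*b) * (2 * C c) := by
    rw [C_mul, C_mul, C_mul, map_ofNat]
  have hc2 : C (a*b*c^2) = C (a*b) * C c^2 := by
    rw [C_mul, C_pow]
  have hqd : σ1 * g i1 + σ2 * g i2 =
      -(C (a*b*(2*c)) * X^(2*L+2)) - C (a*b*c^2) * X^(2*L+1) + σ1 * eG + σ2 * eH := by
    conv_lhs => rw [hG, hH]
    rw [mul_add, mul_add, e1, e2, h2c, hc2]
    ring
  -- degree bounds on remainder terms
  have hndσ1eG : (σ1 * eG).natDegree ≤ 2*L+2 := by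
    refine le_trans natDegree_mul_le ?_
    have h1' : σ1.natDegree ≤ 2*s1+2 := by
      rw [hσ1def]
      refine le_trans (natDegree_C_mul_le _ _) ?_
      refine le_trans (natDegree_pow_le) ?_
      have : (X^s1 * (X + C c) : F[X]).natDegree ≤ s1 + 1 := by
        refine le_trans natDegree_mul_le ?_
        simp [natDegree_X_add_C]
      omega
    omega
  have hndσ2eH : (σ2 * eH).natDegree ≤ 2*L+2 := by
    refine le_trans natDegree_mul_le ?_
    have h1' : σ2.natDegree ≤ 2*t1 := by
      rw [hσ2def]
      refine le_trans (natDegree_C_mul_le _ _) ?_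
      simp [← pow_mul, mul_comm]
    omega
  -- coefficient computations
  have hcσ1eG : (σ1 * eG).coeff (2*L+2) = b * g1 := by
    have hrw : σ1 * eG = C b * (X^(2*s1) * ((X + C c)^2 * eG)) := by
      rw [hσ1def]; ring
    rw [hrw, coeff_C_mul, show 2*L+2 = (2*m+2) + 2*s1 by omega, coeff_X_pow_mul]
    have hv : (X + C c)^2 * eG = X^2 * eG + C (2*c) * (X * eG) + C (c^2) * eG := by
      rw [C_mul, map_ofNat, C_pow]
      ring
    rw [hv, coeff_add, coeff_add, coeff_C_mul, coeff_C_mul,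
      show (2*m+2 : ℕ) = 2*m + 2 by omega, coeff_X_pow_mul]
    have hz1 : (X * eG).coeff (2*m + 2) = 0 := by
      refine coeff_eq_zero_of_natDegree_lt (lt_of_le_of_lt natDegree_mul_le ?_)
      simp; omega
    have hz2 : eG.coeff (2*m + 2) = 0 :=
      coeff_eq_zero_of_natDegree_lt (by omega)
    rw [hz1, hz2, hg1def]
    ring
  have hcσ2eH : (σ2 * eH).coeff (2*L+2) = a * h1 := by
    have hrw : σ2 * eH = C a * (X^(2*t1) * eH) := by
      rw [hσ2def]; ring
    rw [hrw, coeff_C_mul, show 2*L+2 = 2*n + 2*t1 by omega, coeff_X_pow_mul, hh1def]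
  -- assemble: q has natDegree ≤ 2L+2 and coeff -1 at 2L+2
  have hcoeff : (σ1 * g i1 + σ2 * g i2).coeff (2*L+2) = -1 := by
    rw [hqd]
    rw [coeff_add, coeff_add, coeff_sub, coeff_neg, coeff_CX, coeff_CX,
      if_pos rfl, if_neg (by omega), hcσ1eG, hcσ2eH]
    linear_combination -hc
  have hcoeff_hi : ∀ k, 2*L+3 ≤ k → (σ1 * g i1 + σ2 * g i2).coeff k = 0 := by
    intro k hk
    rw [hqd, coeff_add, coeff_add, coeff_sub, coeff_neg, coeff_CX, coeff_CX,
      if_neg (by omega), if_neg (by omega),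
      coeff_eq_zero_of_natDegree_lt (lt_of_le_of_lt hndσ1eG (by omega)),
      coeff_eq_zero_of_natDegree_lt (lt_of_le_of_lt hndσ2eH (by omega))]
    ring
  have hndq : (σ1 * g i1 + σ2 * g i2).natDegree ≤ 2*L+2 := by
    refine ndeg_of_deg_lt _ _ ?_
    rw [show (2*L+2)+1 = 2*L+3 by omega, degree_lt_iff_coeff_zero]
    exact fun k hk => hcoeff_hi k hk
  refine finalStep g σ hσW (L+1) (by omega) ?_ ?_
  · rw [hsum, show 2*(L+1) = 2*L+2 by omega]
    exact hndq
  · rw [hsum, show 2*(L+1) = 2*L+2 by omega, hcoeff]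
    push_cast
    norm_num

theorem evNonneg (P : ℝ[X]) (h : 0 ≤ P.leadingCoeff) : ∀ᶠ x in atTop, 0 ≤ P.eval x := by
  rcases le_or_gt P.degree 0 with hd | hd
  · have hP : P = C (P.coeff 0) := eq_C_of_degree_le_zero hd
    have h0 : 0 ≤ P.coeff 0 := by
      rw [hP, leadingCoeff_C] at h; exact h
    filter_upwards with x
    rw [hP]; simpa using h0
  · exact (tendsto_atTop_of_leadingCoeff_nonneg P hd h).eventually_ge_atTop 0


theorem stmt13 (F : Subfield ℝ) (s : ℕ) (g : Fin s → F[X])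
    (hKS : IsCompact {x : ℝ | ∀ i, 0 ≤ pev F (g i) x}) :
    ∃ N : ℕ, ∃ (σ₀ : F[X]) (σ : Fin s → F[X]),
      SumWtSq F σ₀ ∧ (∀ i, SumWtSq F (σ i)) ∧
      C ((N : F)) - X ^ 2 = σ₀ + ∑ i, σ i * g i := by
  classical
  obtain ⟨R, hR⟩ := isBounded_iff_forall_norm_le.mp hKS.isBounded
  set P : Fin s → ℝ[X] := fun i => (g i).map (algebraMap F ℝ) with hPdef
  have hpev : ∀ i x, pev F (g i) x = (P i).eval x := by
    intro i x
    rw [hPdef, pev, aeval_def, eval₂_eq_eval_map]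
  have hlcP : ∀ i, (P i).leadingCoeff = (((g i).leadingCoeff : F) : ℝ) := fun i =>
    leadingCoeff_map (algebraMap F ℝ)
  have hndP : ∀ i, (P i).natDegree = (g i).natDegree := fun i =>
    natDegree_map (algebraMap F ℝ)
  -- bad direction at +∞
  have bad_top : ∃ i, (P i).leadingCoeff < 0 := by
    by_contra hno
    push_neg at hno
    have hEv : ∀ᶠ x in atTop, ∀ i, 0 ≤ (P i).eval x :=
      eventually_all.mpr fun i => evNonneg _ (hno i)
    obtain ⟨x, hx1, hx2⟩ := (hEv.and (eventually_gt_atTop R)).exists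
    have hmem : x ∈ {x : ℝ | ∀ i, 0 ≤ pev F (g i) x} := by
      intro i; rw [hpev]; exact hx1 i
    have := hR x hmem
    rw [Real.norm_eq_abs] at this
    have := le_abs_self x
    linarith
  -- bad direction at -∞
  have bad_bot : ∃ j, (P j).leadingCoeff * (-1)^((P j).natDegree) < 0 := by
    by_contra hno
    push_neg at hno
    have hEv : ∀ᶠ x in atTop, ∀ j, 0 ≤ ((P j).comp (-X)).eval x := by
      refine eventually_all.mpr fun j => evNonneg _ ?_
      by_cases h0 : P j = 0
      · rw [h0]; simp
      · rw [leadingCoeff_comp (by rw [natDegree_neg, natDegree_X]; norm_num)]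
        rw [leadingCoeff_neg, leadingCoeff_X]
        exact hno j
    obtain ⟨x, hx1, hx2⟩ := (hEv.and (eventually_gt_atTop R)).exists
    have hmem : (-x) ∈ {x : ℝ | ∀ i, 0 ≤ pev F (g i) x} := by
      intro i
      rw [hpev]
      have := hx1 i
      rwa [eval_comp, eval_neg, eval_X] at this
    have := hR (-x) hmem
    rw [Real.norm_eq_abs, abs_neg] at this
    have h2 := le_abs_self x
    linarith
  obtain ⟨i1, hi1⟩ := bad_top
  have hi1lc : (((g i1).leadingCoeff : F) : ℝ) < 0 := by rwa [hlcP] at hi1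
  have hi1ne : g i1 ≠ 0 := by
    intro h
    rw [h] at hi1lc; simp at hi1lc
  rcases Nat.even_or_odd ((g i1).natDegree) with hev | hodd
  · exact caseA g i1 hi1ne hi1lc hev
  · obtain ⟨j2, hj2⟩ := bad_bot
    have hj2ne : P j2 ≠ 0 := by
      intro h
      rw [h] at hj2; simp at hj2
    rcases Nat.even_or_odd ((g j2).natDegree) with hev2 | hodd2
    · -- even degree, so (-1)^deg = 1, lc < 0
      have : (P j2).leadingCoeff < 0 := by
        rw [hndP, Even.neg_one_pow hev2, mul_one] at hj2
        exact hj2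
      refine caseA g j2 (fun h => hj2ne ?_) ?_ hev2
      · show Polynomial.map _ (g j2) = 0
        rw [h, Polynomial.map_zero]
      rwa [hlcP] at this
    · -- odd degree at j2 : lc > 0 ; odd at i1 : lc < 0
      have hlc2 : (0:ℝ) < (((g j2).leadingCoeff : F) : ℝ) := by
        rw [hndP, Odd.neg_one_pow hodd2, mul_neg_one, hlcP] at hj2
        linarith
      obtain ⟨m, hm⟩ := hodd
      obtain ⟨n, hn⟩ := hodd2
      exact caseB g i1 j2 m n (by omega) (by omega) hi1lc hlc2
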